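/- The map t^a − t^b ↦ t^{D(a)} − t^{D(b)} induces a bijection between the set of binomials t^a − t^b in the toric ideal P whose terms t^a and t^b have disjoint support and the set of binomials t^{a′} − t^{b′} in the vanishing ideal I(X) whose terms t^{a′} and t^{b′} have disjoint support, where D: ℤ^n → ℤ^n is the ℤ-linear map with D(e_i) = d_i e_i. -/

import Mathlib

open MvPolynomial

attribute [local instance] MvPolynomial.gradedAlgebra

section Helpers
variable {K : Type} [Field K] {n : ℕ}

lemma prodXpow_eq_monomial (a : Fin n → ℕ) :
    (∏ i, (X i : MvPolynomial (Fin n) K) ^ a i)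
      = monomial (Finsupp.equivFunOnFinite.symm a) 1 := by
  rw [← MvPolynomial.prod_X_pow_eq_monomial]
  symm
  apply Finset.prod_subset (Finset.subset_univ _)
  intro i _ hi
  have : a i = 0 := by simpa using hi
  simp [this]

lemma prodXpow_inj {a b : Fin n → ℕ}
    (h : (∏ i, (X i : MvPolynomial (Fin n) K) ^ a i) = ∏ i, X i ^ b i) : a = b := by
  rw [prodXpow_eq_monomial, prodXpow_eq_monomial] at h
  have h2 := congrArg (coeff (Finsupp.equivFunOnFinite.symm a)) h
  rw [coeff_monomial, coeff_monomial, if_pos rfl] at h2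
  by_cases hab : Finsupp.equivFunOnFinite.symm b = Finsupp.equivFunOnFinite.symm a
  · exact (Finsupp.equivFunOnFinite.symm.injective hab).symm
  · rw [if_neg hab] at h2; exact absurd h2 one_ne_zero

lemma isHomog_prodXpow (a : Fin n → ℕ) :
    (∏ i, (X i : MvPolynomial (Fin n) K) ^ a i).IsHomogeneous (∑ i, a i) :=
  IsHomogeneous.prod Finset.univ _ a fun i _ => isHomogeneous_X_pow i (a i)

lemma aevalpow_prod (d a : Fin n → ℕ) :
    aeval (R := K) (fun j : Fin n => (X j : MvPolynomial (Fin n) K) ^ d j) (∏ i, X i ^ a i)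
      = ∏ i, (X i : MvPolynomial (Fin n) K) ^ (d i * a i) := by
  rw [map_prod]
  exact Finset.prod_congr rfl fun i _ => by rw [map_pow, aeval_X, ← pow_mul]

lemma aevalPoly_prod (d a : Fin n → ℕ) :
    aeval (R := K) (fun i : Fin n => (Polynomial.X : Polynomial K) ^ d i) (∏ i, X i ^ a i)
      = Polynomial.X ^ ∑ i, d i * a i := by
  rw [map_prod, ← Finset.prod_pow_eq_pow_sum]
  exact Finset.prod_congr rfl fun i _ => by rw [map_pow, aeval_X, ← pow_mul]

lemma eval_prodXpow (g : Fin n → K) (a : Fin n → ℕ) :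
    eval g (∏ i, (X i : MvPolynomial (Fin n) K) ^ a i) = ∏ i, g i ^ a i := by
  rw [map_prod]
  exact Finset.prod_congr rfl fun i _ => by rw [map_pow, eval_X]

lemma aevalpow_injective (d : Fin n → ℕ) (hdpos : ∀ i, 0 < d i) :
    Function.Injective fun f : MvPolynomial (Fin n) K =>
      aeval (fun j : Fin n => (X j : MvPolynomial (Fin n) K) ^ d j) f := by
  have Dinj : ∀ u m : Fin n →₀ ℕ,
      (Finsupp.equivFunOnFinite.symm fun i => d i * u i)
        = (Finsupp.equivFunOnFinite.symm fun i => d i * m i) → u = m := by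
    intro u m h
    have h2 := congrFun (Finsupp.equivFunOnFinite.symm.injective h)
    ext i
    exact Nat.eq_of_mul_eq_mul_left (hdpos i) (h2 i)
  have key : ∀ (f : MvPolynomial (Fin n) K) (m : Fin n →₀ ℕ),
      coeff (Finsupp.equivFunOnFinite.symm fun i => d i * m i)
        (aeval (R := K) (fun j : Fin n => (X j : MvPolynomial (Fin n) K) ^ d j) f)
        = coeff m f := by
    intro f
    induction f using MvPolynomial.induction_on' with
    | monomial u c =>
        intro m
        rw [aeval_monomial]
        have hstep : ∀ i ∈ u.support,
            ((X i : MvPolynomial (Fin n) K) ^ d i) ^ u i = X i ^ (d i * u i) :=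
          fun i _ => by rw [← pow_mul]
        have hu : (u.prod fun i e => ((X i : MvPolynomial (Fin n) K) ^ d i) ^ e)
            = ∏ i, (X i : MvPolynomial (Fin n) K) ^ (d i * u i) := by
          rw [Finsupp.prod, Finset.prod_congr rfl hstep]
          exact Finset.prod_subset (Finset.subset_univ _)
            (fun i _ hi => by simp [Finsupp.notMem_support_iff.mp hi])
        rw [hu, prodXpow_eq_monomial, algebraMap_eq, C_mul_monomial, mul_one,
            coeff_monomial, coeff_monomial]
        by_cases hum : u = m
        · subst hum; rw [if_pos rfl, if_pos rfl]
        · rw [if_neg (fun h => hum (Dinj u m h)), if_neg hum]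
    | add p q hp hq => intro m; rw [map_add, coeff_add, coeff_add, hp, hq]
  intro f1 f2 h
  ext m
  rw [← key f1 m, ← key f2 m]
  simp only at h
  rw [h]

lemma span_homogeneousComponent_mem (S : Set (MvPolynomial (Fin n) K))
    (hS : ∀ f ∈ S, ∃ e, f.IsHomogeneous e)
    {f : MvPolynomial (Fin n) K} (hf : f ∈ Ideal.span S) (e : ℕ) :
    homogeneousComponent e f ∈ Ideal.span S := by
  have h := Ideal.homogeneous_span (homogeneousSubmodule (Fin n) K) S
    (fun x hx => by
      obtain ⟨e', he'⟩ := hS x hx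
      exact ⟨e', (mem_homogeneousSubmodule e' x).2 he'⟩)
  have h2 := h e hf
  rwa [show ((DirectSum.decompose (homogeneousSubmodule (Fin n) K) f e :
      homogeneousSubmodule (Fin n) K e) : MvPolynomial (Fin n) K)
      = homogeneousComponent e f from MvPolynomial.decomposition.decompose'_apply f e] at h2

end Helpers

/-- **Lemma.** Let `K = 𝔽_q`, `β` a generator of `Kˣ`, `d i = orderOf (β ^ v i)`.
The substitution `t_i ↦ t_i ^ d i` (which sends `t^a - t^b` to `t^{D a} - t^{D b}`,
where `(D a) i = d i * a i`) is a bijection from the set of binomials `t^a - t^b` of the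
toric ideal `P` whose terms have disjoint support onto the set of binomials
`t^{a'} - t^{b'}` of the vanishing ideal `IX` whose terms have disjoint support. -/
theorem binomial_bijection_toric_to_vanishing
    (K : Type) [Field K] [Fintype K] (n : ℕ) (hn : 2 ≤ n)
    (v : Fin n → ℕ) (hv : ∀ i, 0 < v i)
    (β : Kˣ) (hβ : ∀ x : Kˣ, x ∈ Subgroup.zpowers β)
    (d : Fin n → ℕ) (hd : ∀ i, d i = orderOf (β ^ v i))
    (IX : Ideal (MvPolynomial (Fin n) K))
    (hIX : IX = Ideal.span {f : MvPolynomial (Fin n) K |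
      (∃ e, f.IsHomogeneous e) ∧
      ∀ x : Fin n → Kˣ, eval (fun i => (x i : K) ^ v i) f = 0})
    (P : Ideal (MvPolynomial (Fin n) K))
    (hP : P = RingHom.ker (aeval (fun i : Fin n => (Polynomial.X : Polynomial K) ^ d i) :
      MvPolynomial (Fin n) K →ₐ[K] Polynomial K)) :
    Set.BijOn (fun f => aeval (fun j : Fin n => (X j : MvPolynomial (Fin n) K) ^ d j) f)
      {f : MvPolynomial (Fin n) K | f ∈ P ∧ ∃ a b : Fin n → ℕ,
        (∀ i, a i = 0 ∨ b i = 0) ∧ f = (∏ i, X i ^ a i) - ∏ i, X i ^ b i}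
      {f : MvPolynomial (Fin n) K | f ∈ IX ∧ ∃ a' b' : Fin n → ℕ,
        (∀ i, a' i = 0 ∨ b' i = 0) ∧ f = (∏ i, X i ^ a' i) - ∏ i, X i ^ b' i} := by
  classical
  have dpos : ∀ i, 0 < d i := fun i => (hd i) ▸ orderOf_pos _
  -- key unit computation
  have hKunit : ∀ (x : Kˣ) (i : Fin n), (x ^ v i) ^ d i = 1 := by
    intro x i
    obtain ⟨m, hm⟩ := hβ x
    have hm' : β ^ m = x := hm
    have h1 : (β ^ v i) ^ d i = 1 := by rw [hd i]; exact pow_orderOf_eq_one _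
    have key : ∀ (m : ℤ) (N : ℕ), ((β ^ m) ^ N : Kˣ) = (β ^ N) ^ m := by
      intro m N
      rw [← zpow_natCast (β ^ m) N, ← zpow_mul, mul_comm, zpow_mul, zpow_natCast]
    rw [← hm', ← pow_mul, key, pow_mul, h1, one_zpow]
  have hfac : ∀ (x : Kˣ) (i : Fin n) (c : ℕ), d i ∣ c → ((x : K) ^ v i) ^ c = 1 := by
    rintro x i c ⟨k, rfl⟩
    have h1 : ((x ^ v i) ^ (d i * k) : Kˣ) = 1 := by
      rw [pow_mul, hKunit x i, one_pow]
    rw [← Units.val_pow_eq_pow_val, ← Units.val_pow_eq_pow_val, h1, Units.val_one]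
  have hIXvanish : ∀ f ∈ IX, ∀ x : Fin n → Kˣ, eval (fun i => (x i : K) ^ v i) f = 0 := by
    intro f hf x
    rw [hIX] at hf
    have hle : Ideal.span {f : MvPolynomial (Fin n) K |
        (∃ e, f.IsHomogeneous e) ∧
        ∀ x : Fin n → Kˣ, eval (fun i => (x i : K) ^ v i) f = 0}
        ≤ RingHom.ker (eval (fun i => (x i : K) ^ v i)) :=
      Ideal.span_le.mpr (fun g hg => hg.2 x)
    exact hle hf
  -- membership of suitable binomials in IX
  have hgen_mem : ∀ c e : Fin n → ℕ, (∑ i, c i) = (∑ i, e i) →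
      (∀ i, d i ∣ c i) → (∀ i, d i ∣ e i) →
      ((∏ i, (X i : MvPolynomial (Fin n) K) ^ c i) - ∏ i, X i ^ e i) ∈ IX := by
    intro c e hsum hc he
    rw [hIX]
    apply Ideal.subset_span
    refine ⟨⟨∑ i, c i, (isHomog_prodXpow c).sub (hsum ▸ isHomog_prodXpow e)⟩, ?_⟩
    intro x
    rw [map_sub, eval_prodXpow, eval_prodXpow,
        Finset.prod_congr rfl (fun i _ => hfac (x i) i (c i) (hc i)),
        Finset.prod_congr rfl (fun i _ => hfac (x i) i (e i) (he i)),
        Finset.prod_const_one, sub_self]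
  -- membership in P
  have hPmem : ∀ a b : Fin n → ℕ,
      (((∏ i, (X i : MvPolynomial (Fin n) K) ^ a i) - ∏ i, X i ^ b i) ∈ P
        ↔ (∑ i, d i * a i) = ∑ i, d i * b i) := by
    intro a b
    rw [hP, RingHom.mem_ker, map_sub, aevalPoly_prod, aevalPoly_prod, sub_eq_zero]
    constructor
    · intro h
      have h2 := congrArg Polynomial.natDegree h
      simpa using h2
    · intro h; rw [h]
  constructor
  · -- MapsTo
    rintro f ⟨hfP, a, b, hdisj, rfl⟩
    have hsum : (∑ i, d i * a i) = ∑ i, d i * b i := (hPmem a b).mp hfP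
    refine ⟨?_, fun i => d i * a i, fun i => d i * b i,
      fun i => (hdisj i).imp (fun h => by simp [h]) (fun h => by simp [h]),
      by simp only [map_sub, aevalpow_prod]⟩
    show aeval _ _ ∈ IX
    rw [map_sub, aevalpow_prod, aevalpow_prod]
    exact hgen_mem _ _ hsum (fun i => dvd_mul_right _ _) (fun i => dvd_mul_right _ _)
  refine ⟨fun f1 _ f2 _ h => aevalpow_injective d dpos h, ?_⟩
  -- SurjOn
  rintro f' ⟨hf'IX, a', b', hdisj, rfl⟩
  by_cases hab : a' = b'
  · subst hab
    exact ⟨0, ⟨P.zero_mem, fun _ => 0, fun _ => 0, fun i => Or.inl rfl, by simp⟩, by simp⟩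
  -- degrees are equal
  have hdeg : (∑ i, a' i) = ∑ i, b' i := by
    by_contra hAB
    have hSprop : ∀ f ∈ {f : MvPolynomial (Fin n) K |
        (∃ e, f.IsHomogeneous e) ∧
        ∀ x : Fin n → Kˣ, eval (fun i => (x i : K) ^ v i) f = 0}, ∃ e, f.IsHomogeneous e :=
      fun f hf => hf.1
    have hcomp := span_homogeneousComponent_mem _ hSprop (hIX ▸ hf'IX) (∑ i, a' i)
    rw [map_sub,
        homogeneousComponent_of_mem ((mem_homogeneousSubmodule _ _).2 (isHomog_prodXpow a')),
        homogeneousComponent_of_mem ((mem_homogeneousSubmodule _ _).2 (isHomog_prodXpow b')),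
        if_pos rfl, if_neg hAB, sub_zero] at hcomp
    have hvan := hIXvanish _ (hIX ▸ hcomp) (fun _ => 1)
    rw [eval_prodXpow] at hvan
    simp at hvan
  -- divisibility
  have hdvd : ∀ i, d i ∣ a' i ∧ d i ∣ b' i := by
    intro i
    set x : Fin n → Kˣ := fun j => if j = i then β else 1 with hx
    have hvan := hIXvanish _ hf'IX x
    rw [map_sub, eval_prodXpow, eval_prodXpow, sub_eq_zero] at hvan
    have hprod : ∀ c : Fin n → ℕ,
        (∏ j, ((x j : K) ^ v j) ^ c j) = ((β : K) ^ v i) ^ c i := by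
      intro c
      rw [Finset.prod_eq_single i
        (fun j _ hj => by simp [hx, hj]) (fun h => absurd (Finset.mem_univ i) h)]
      simp [hx]
    rw [hprod a', hprod b'] at hvan
    have key : ∀ c c' : Fin n → ℕ, c' i = 0 →
        ((β : K) ^ v i) ^ c i = ((β : K) ^ v i) ^ c' i → d i ∣ c i := by
      intro c c' hc' hvn
      rw [hc', pow_zero] at hvn
      have hu : ((β ^ v i) ^ c i : Kˣ) = 1 := by
        apply Units.ext
        rw [Units.val_pow_eq_pow_val, Units.val_pow_eq_pow_val, Units.val_one]
        exact hvn
      rw [hd i]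
      exact orderOf_dvd_of_pow_eq_one hu
    rcases hdisj i with h0 | h0
    · exact ⟨h0 ▸ dvd_zero _, key b' a' h0 hvan.symm⟩
    · exact ⟨key a' b' h0 hvan, h0 ▸ dvd_zero _⟩
  refine ⟨(∏ i, (X i : MvPolynomial (Fin n) K) ^ (a' i / d i)) - ∏ i, X i ^ (b' i / d i),
    ⟨?_, fun i => a' i / d i, fun i => b' i / d i,
      fun i => (hdisj i).imp (fun h => by simp [h]) (fun h => by simp [h]),
      rfl⟩, ?_⟩
  · rw [hPmem]
    rw [Finset.sum_congr rfl (fun i _ => Nat.mul_div_cancel' (hdvd i).1),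
        Finset.sum_congr rfl (fun i _ => Nat.mul_div_cancel' (hdvd i).2)]
    exact hdeg
  · have e1 : (∏ i, (X i : MvPolynomial (Fin n) K) ^ (d i * (a' i / d i))) = ∏ i, X i ^ a' i :=
      Finset.prod_congr rfl fun i _ => by rw [Nat.mul_div_cancel' (hdvd i).1]
    have e2 : (∏ i, (X i : MvPolynomial (Fin n) K) ^ (d i * (b' i / d i))) = ∏ i, X i ^ b' i :=
      Finset.prod_congr rfl fun i _ => by rw [Nat.mul_div_cancel' (hdvd i).2]
    show aeval _ _ = _
    simp only [map_sub, aevalpow_prod]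
    rw [e1, e2]
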